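/- Let V and W be real Hilbert spaces and B : V × V → W a continuous bilinear map, and set λ_max = sup_{v∈V, ‖v‖=1} ‖B(v,v)‖. Then for all unit vectors v, w ∈ V, ‖B(w,w) − 2⟨v,w⟩² B(v,v)‖ ≤ (3 − 2⟨v,w⟩²) λ_max. -/

import Mathlib

open scoped RealInnerProductSpace

noncomputable section

/-- Lemma `lem:estimator_bilinear` (i).
Let `V, W` be real Hilbert spaces and `B : V × V → W` a continuous bilinear map, and let
`λ_max = sup_{‖v‖ = 1} ‖B(v,v)‖`. Then for all unit vectors `v, w`,
`‖B(w,w) - 2 ⟪v,w⟫² B(v,v)‖ ≤ (3 - 2 ⟪v,w⟫²) λ_max`. -/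
theorem bilinear_diag_bound {V W : Type*}
    [NormedAddCommGroup V] [InnerProductSpace ℝ V] [CompleteSpace V]
    [NormedAddCommGroup W] [InnerProductSpace ℝ W] [CompleteSpace W]
    [Nontrivial V]
    (B : V →L[ℝ] V →L[ℝ] W) (lmax : ℝ)
    (hlmax : lmax = ⨆ v : {v : V // ‖v‖ = 1}, ‖B v.1 v.1‖)
    (v w : V) (hv : ‖v‖ = 1) (hw : ‖w‖ = 1) :
    ‖B w w - (2 * ⟪v, w⟫ ^ 2) • B v v‖ ≤ (3 - 2 * ⟪v, w⟫ ^ 2) * lmax := by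
  have hbdd : BddAbove (Set.range fun v : {v : V // ‖v‖ = 1} => ‖B v.1 v.1‖) := by
    refine ⟨‖B‖, fun y hy => ?_⟩
    obtain ⟨⟨x, hx⟩, rfl⟩ := hy
    calc ‖B x x‖ ≤ ‖B‖ * ‖x‖ * ‖x‖ := B.le_opNorm₂ x x
      _ = ‖B‖ := by rw [hx]; ring
  -- key: ‖B x x‖ ≤ lmax * ‖x‖^2
  have hB : ∀ x : V, ‖B x x‖ ≤ lmax * ‖x‖ ^ 2 := by
    intro x
    rcases eq_or_ne x 0 with rfl | hx
    · simp
    · have hn : ‖x‖ ≠ 0 := norm_ne_zero_iff.mpr hx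
      have hunit : ‖(‖x‖⁻¹ : ℝ) • x‖ = 1 := by
        rw [norm_smul, norm_inv, norm_norm, inv_mul_cancel₀ hn]
      have hle : ‖B ((‖x‖⁻¹ : ℝ) • x) ((‖x‖⁻¹ : ℝ) • x)‖ ≤ lmax := by
        rw [hlmax]
        exact le_ciSup hbdd ⟨_, hunit⟩
      have : ‖B ((‖x‖⁻¹ : ℝ) • x) ((‖x‖⁻¹ : ℝ) • x)‖ = (‖x‖ ^ 2)⁻¹ * ‖B x x‖ := by
        simp [map_smul, norm_smul, norm_inv, norm_norm]
        ring
      rw [this] at hle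
      have h2 : (0 : ℝ) < ‖x‖ ^ 2 := by positivity
      calc ‖B x x‖ = ‖x‖ ^ 2 * ((‖x‖ ^ 2)⁻¹ * ‖B x x‖) := by field_simp
        _ ≤ ‖x‖ ^ 2 * lmax := by nlinarith [norm_nonneg (B x x)]
        _ = lmax * ‖x‖ ^ 2 := mul_comm _ _
  set t : ℝ := ⟪v, w⟫ with ht
  set u : V := w - t • v with hu
  set z : V := (2 * t) • v - w with hz
  have hkey : B w w - (2 * t ^ 2) • B v v = (2 : ℝ) • B u u - B z z := by
    simp only [hu, hz, map_sub, map_smul, ContinuousLinearMap.sub_apply,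
      ContinuousLinearMap.smul_apply, smul_sub, smul_smul]
    module
  have hvv : ⟪v, v⟫ = 1 := by
    have := real_inner_self_eq_norm_sq v; rw [hv] at this; simpa using this
  have hww : ⟪w, w⟫ = 1 := by
    have := real_inner_self_eq_norm_sq w; rw [hw] at this; simpa using this
  have hwv : ⟪w, v⟫ = t := by rw [real_inner_comm]
  have hu2 : ‖u‖ ^ 2 = 1 - t ^ 2 := by
    rw [← real_inner_self_eq_norm_sq, hu]
    simp [inner_sub_sub_self, real_inner_smul_left, real_inner_smul_right, hvv, hww,
      hwv, ← ht, -inner_self_eq_norm_sq_to_K]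
    ring
  have hz1 : ‖z‖ ^ 2 = 1 := by
    rw [← real_inner_self_eq_norm_sq, hz]
    simp [inner_sub_sub_self, real_inner_smul_left, real_inner_smul_right, hvv, hww,
      hwv, ← ht, -inner_self_eq_norm_sq_to_K]
    ring
  have hznorm : ‖z‖ = 1 := by nlinarith [norm_nonneg z]
  have hlm0 : 0 ≤ lmax := le_trans (norm_nonneg (B w w)) (by simpa [hw] using hB w)
  have ht2 : t ^ 2 ≤ 1 := by
    have := abs_real_inner_le_norm v w
    rw [hv, hw] at this
    nlinarith [abs_nonneg t, sq_abs t]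
  calc ‖B w w - (2 * t ^ 2) • B v v‖ = ‖(2 : ℝ) • B u u - B z z‖ := by rw [hkey]
    _ ≤ ‖(2 : ℝ) • B u u‖ + ‖B z z‖ := norm_sub_le _ _
    _ = 2 * ‖B u u‖ + ‖B z z‖ := by rw [norm_smul]; norm_num
    _ ≤ 2 * (lmax * ‖u‖ ^ 2) + lmax * ‖z‖ ^ 2 := by
        have h1 := hB u
        have h2 := hB z
        nlinarith
    _ = (3 - 2 * t ^ 2) * lmax := by rw [hu2, hz1]; ring

end
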